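/- Let E and X be finite sets of equations and variables, var : E → Finset X, and φ(M) = |M| − |var(M)| for M ⊆ E, where var(M) = ⋃_{e∈M} var(e). For N ⊆ E, if max{φ(M') : M' ⊆ N} ≥ 1, then the overdetermined part N⁺ (the unique smallest subset of N attaining this maximum) is a PSO set. -/
import Mathlib


open Finset

/-- The structural redundancy `φ(M) = |M| − |var(M)|` (as an integer). -/
def red {E X : Type*} [DecidableEq X] (var : E → Finset X) (M : Finset E) : ℤ :=
  (M.card : ℤ) - (M.biUnion var).card

/-- A set `M` is proper structurally overdetermined (PSO) if it is nonempty and every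
proper subset has strictly smaller redundancy. -/
def IsPSO {E X : Type*} [DecidableEq X] (var : E → Finset X) (M : Finset E) : Prop :=
  M.Nonempty ∧ ∀ M' ⊂ M, red var M' < red var M

/-- The maximal redundancy attained by subsets of `N`. -/
def maxRed {E X : Type*} [DecidableEq E] [DecidableEq X]
    (var : E → Finset X) (N : Finset E) : ℤ :=
  N.powerset.sup' (Finset.powerset_nonempty N) (red var)

/-- If the maximal redundancy over subsets of `N` is at least `1`,
then the overdetermined part `N⁺` — the (unique) smallest subset of `N` attaining the
maximal redundancy — is a PSO set. -/
theorem stmt15_overdetermined_part_is_PSO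
    {E X : Type*} [Fintype E] [Fintype X] [DecidableEq E] [DecidableEq X]
    (var : E → Finset X) (N : Finset E) (hmax : 1 ≤ maxRed var N) :
    ∀ P : Finset E, P ⊆ N → red var P = maxRed var N →
      (∀ Q ⊆ N, red var Q = maxRed var N → P ⊆ Q) → IsPSO var P := by
  intro P hPN hPmax hmin
  constructor
  · rcases P.eq_empty_or_nonempty with h | h
    · exfalso
      have : red var P = 0 := by simp [h, red]
      omega
    · exact h
  · intro M' hM'
    have hM'N : M' ⊆ N := hM'.subset.trans hPN
    have hle : red var M' ≤ maxRed var N :=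
      Finset.le_sup' (red var) (Finset.mem_powerset.mpr hM'N)
    rcases lt_or_eq_of_le hle with h | h
    · omega
    · exact absurd (hmin M' hM'N h) (fun hc => hM'.2 hc)
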